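/- arXiv:2512.10781 — 4 statements merged into one kernel-verified Lean document; each statement's English description precedes it below -/
import Mathlib

section
/- Let ℓ > 3 and p > 3 be primes and let v be a unit of ℤ/ℓℤ. Then there exists a unit u of ℤ/ℓℤ such that v·u^p is a cube in the unit group of ℤ/ℓℤ and −(v·u^p)/3 is a square in the unit group of ℤ/ℓℤ. -/
/-- Let `ℓ > 3` and `p > 3` be primes and `v` a unit of `ℤ/ℓℤ`. Then there is a unit `u` such
that `v * u ^ p` is a cube in `(ℤ/ℓℤ)ˣ` and `-(v * u ^ p) / 3` is a square in `(ℤ/ℓℤ)ˣ`. -/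
theorem exists_unit_cube_and_square (ℓ p : ℕ) [Fact ℓ.Prime] (hp : p.Prime)
    (hℓ3 : ℓ > 3) (hp3 : p > 3) (v : (ZMod ℓ)ˣ) :
    ∃ u : (ZMod ℓ)ˣ, (∃ w : (ZMod ℓ)ˣ, v * u ^ p = w ^ 3) ∧
      (∃ s : (ZMod ℓ)ˣ, -(((v * u ^ p : (ZMod ℓ)ˣ) : ZMod ℓ) / (3 : ZMod ℓ)) = (s : ZMod ℓ) ^ 2) := by
  -- 3 is nonzero in ZMod ℓ
  have h3 : (3 : ZMod ℓ) ≠ 0 := by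
    have : ((3 : ℕ) : ZMod ℓ) ≠ 0 := by
      rw [Ne, ZMod.natCast_eq_zero_iff]
      intro h
      have := Nat.le_of_dvd (by norm_num) h
      omega
    simpa using this
  -- p^2 = 6m + 1
  have h2 : ¬ (2 ∣ p) := by
    intro h
    have := (Nat.prime_dvd_prime_iff_eq Nat.prime_two hp).mp h
    omega
  have h3p : ¬ (3 ∣ p) := by
    intro h
    have := (Nat.prime_dvd_prime_iff_eq Nat.prime_three hp).mp h
    omega
  obtain ⟨m, hm⟩ : ∃ m, p * p = 6 * m + 1 := by
    obtain ⟨k, hk⟩ : ∃ k, p = 6 * k + 1 ∨ p = 6 * k + 5 := ⟨p / 6, by omega⟩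
    rcases hk with h | h
    · exact ⟨6 * k * k + 2 * k, by subst h; ring⟩
    · exact ⟨6 * k * k + 10 * k + 4, by subst h; ring⟩
  have hv : (v : ZMod ℓ) ≠ 0 := v.ne_zero
  set c : (ZMod ℓ)ˣ := Units.mk0 (3 : ZMod ℓ) h3 with hc
  set w : (ZMod ℓ)ˣ := (-c) ^ 3 * v⁻¹ with hw
  refine ⟨w ^ p, ⟨-c * (w ^ m) ^ 2, ?_⟩, ⟨c * (w ^ m) ^ 3, ?_⟩⟩
  · apply Units.ext
    push_cast [hw, hc, Units.val_inv_eq_inv_val]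
    rw [← pow_mul, hm]
    field_simp
    have hvv := mul_inv_cancel₀ hv
    linear_combination (-(((Units.mk0 (3 : ZMod ℓ) h3 : (ZMod ℓ)ˣ) : ZMod ℓ) ^ 3 * (((Units.mk0 (3 : ZMod ℓ) h3 : (ZMod ℓ)ˣ) : ZMod ℓ) ^ (m * 18) * (↑v)⁻¹ ^ (m * 6) * (-1 : ZMod ℓ) ^ (m * 6)))) * hvv
  · push_cast [hw, hc, Units.val_inv_eq_inv_val]
    rw [← pow_mul, hm]
    field_simp
    have hvv := mul_inv_cancel₀ hv
    linear_combination (((Units.mk0 (3 : ZMod ℓ) h3 : (ZMod ℓ)ˣ) : ZMod ℓ) ^ 3 * (((Units.mk0 (3 : ZMod ℓ) h3 : (ZMod ℓ)ˣ) : ZMod ℓ) ^ (m * 18) * (↑v)⁻¹ ^ (m * 6) * (-1 : ZMod ℓ) ^ (m * 6))) * hvv + (((Units.mk0 (3 : ZMod ℓ) h3 : (ZMod ℓ)ˣ) : ZMod ℓ) ^ 2 * (((Units.mk0 (3 : ZMod ℓ) h3 : (ZMod ℓ)ˣ) : ZMod ℓ) ^ (m * 18) * (↑v)⁻¹ ^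 (m * 6) * (-1 : ZMod ℓ) ^ (m * 6))) * (Units.val_mk0 h3)
end

section
/- Let ℓ > 3 and p > 3 be primes, and let A, B ∈ ℤ/ℓℤ satisfy 4A^3 + 27B^2 ≠ 0. Then there exist elements a, b ∈ ℤ/ℓℤ and units u, c of ℤ/ℓℤ such that 2a = −B·u^6, 3b = A·u^4, and a^2 + b^3 = c^p. -/
/-- Let `ℓ > 3` and `p > 3` be primes and `A B : ℤ/ℓℤ` with `4A³ + 27B² ≠ 0`. Then there exist
`a b : ℤ/ℓℤ` and units `u, c` of `ℤ/ℓℤ` with `2a = -B u⁶`, `3b = A u⁴` and `a² + b³ = cᵖ`. -/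
theorem exists_frey_coeffs_good_reduction (ℓ p : ℕ) (hℓ : ℓ.Prime) (hp : p.Prime)
    (hℓ3 : ℓ > 3) (hp3 : p > 3) (A B : ZMod ℓ) (hAB : 4 * A ^ 3 + 27 * B ^ 2 ≠ 0) :
    ∃ (a b : ZMod ℓ) (u c : (ZMod ℓ)ˣ),
      2 * a = -B * (u : ZMod ℓ) ^ 6 ∧ 3 * b = A * (u : ZMod ℓ) ^ 4 ∧
      a ^ 2 + b ^ 3 = (c : ZMod ℓ) ^ p := by
  haveI : Fact ℓ.Prime := ⟨hℓ⟩
  have h2 : (2 : ZMod ℓ) ≠ 0 := by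
    have hd : ¬ (ℓ ∣ 2) := fun h => absurd (Nat.le_of_dvd (by norm_num) h) (by omega)
    exact (fun h => hd ((ZMod.natCast_eq_zero_iff 2 ℓ).mp (by exact_mod_cast h)))
  have h3 : (3 : ZMod ℓ) ≠ 0 := by
    have hd : ¬ (ℓ ∣ 3) := fun h => absurd (Nat.le_of_dvd (by norm_num) h) (by omega)
    exact (fun h => hd ((ZMod.natCast_eq_zero_iff 3 ℓ).mp (by exact_mod_cast h)))
  have h108 : (108 : ZMod ℓ) ≠ 0 := by
    have h : (108 : ZMod ℓ) = 2^2 * 3^3 := by norm_num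
    rw [h]
    exact mul_ne_zero (pow_ne_zero _ h2) (pow_ne_zero _ h3)
  have hK : (4 * A ^ 3 + 27 * B ^ 2) / 108 ≠ (0 : ZMod ℓ) := div_ne_zero hAB h108
  obtain ⟨K, hKval⟩ := (isUnit_iff_ne_zero.mpr hK)
  have hcnat : Nat.Coprime 12 p := by
    refine Nat.Coprime.symm ((hp.coprime_iff_not_dvd).mpr ?_)
    intro h
    have := Nat.le_of_dvd (by norm_num) h
    interval_cases p <;> revert h hp <;> decide
  have hcop : IsCoprime (12 : ℤ) (p : ℤ) := by
    exact_mod_cast Nat.isCoprime_iff_coprime.mpr hcnat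
  obtain ⟨s, t, hst⟩ := hcop
  refine ⟨(-B * (K ^ (-s) : (ZMod ℓ)ˣ).val ^ 6) / 2, (A * (K ^ (-s) : (ZMod ℓ)ˣ).val ^ 4) / 3,
    K ^ (-s), K ^ t, ?_, ?_, ?_⟩
  · rw [mul_comm, div_mul_cancel₀ _ h2]
  · rw [mul_comm, div_mul_cancel₀ _ h3]
  · have hu12 : ((K ^ (-s) : (ZMod ℓ)ˣ).val) ^ 12 = ((K ^ (-(12*s)) : (ZMod ℓ)ˣ) : ZMod ℓ) := by
      rw [← Units.val_pow_eq_pow_val, ← zpow_natCast (K ^ (-s)) 12, ← zpow_mul]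
      ring_nf
    have key : ((K : ZMod ℓ)) * ((K ^ (-s) : (ZMod ℓ)ˣ).val) ^ 12
        = ((K ^ t : (ZMod ℓ)ˣ) : ZMod ℓ) ^ p := by
      rw [hu12, ← Units.val_pow_eq_pow_val, ← zpow_natCast (K ^ t) p, ← zpow_mul,
        ← Units.val_mul]
      congr 1
      nth_rewrite 1 [← zpow_one K]
      rw [← zpow_add]
      congr 1
      · omega
    have h4 : (4 : ZMod ℓ) ≠ 0 := by
      have h : (4 : ZMod ℓ) = 2^2 := by norm_num
      rw [h]; exact pow_ne_zero _ h2
    have h27 : (27 : ZMod ℓ) ≠ 0 := by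
      have h : (27 : ZMod ℓ) = 3^3 := by norm_num
      rw [h]; exact pow_ne_zero _ h3
    rw [← key, hKval]
    generalize ((K ^ (-s) : (ZMod ℓ)ˣ) : ZMod ℓ) = v
    field_simp
    ring
end

section
/- Let ℓ > 3 and p > 3 be distinct primes, and let A, B ∈ ℤ_ℓ be such that 4A^3 + 27B^2 is a unit of ℤ_ℓ. Then there exist a, b ∈ ℤ_ℓ and units c, u of ℤ_ℓ such that a^2 + b^3 = c^p, and such that 2a ≡ −B·u^6 (mod ℓ) and 3b ≡ A·u^4 (mod ℓ). -/
private lemma isUnit_nat_padic (ℓ : ℕ) [Fact ℓ.Prime] (n : ℕ) (hn : ¬ ℓ ∣ n) :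
    IsUnit ((n : ℤ) : ℤ_[ℓ]) := by
  rw [PadicInt.isUnit_iff]
  refine le_antisymm (PadicInt.norm_le_one _) ?_
  by_contra h
  push_neg at h
  rw [PadicInt.norm_int_lt_one_iff_dvd] at h
  exact hn (by exact_mod_cast h)

/-- Let `ℓ > 3` and `p > 3` be distinct primes and `A B : ℤ_ℓ` with `4A³ + 27B²` a unit. Then
there exist `a b : ℤ_ℓ` and units `c, u` of `ℤ_ℓ` with `a² + b³ = cᵖ`, `2a ≡ -B u⁶ (mod ℓ)`
and `3b ≡ A u⁴ (mod ℓ)`. -/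
theorem exists_ell_primitive_solution_good_reduction (ℓ p : ℕ) [Fact ℓ.Prime] (hp : p.Prime)
    (hℓ3 : ℓ > 3) (hp3 : p > 3) (hℓp : ℓ ≠ p) (A B : ℤ_[ℓ])
    (hAB : IsUnit (4 * A ^ 3 + 27 * B ^ 2)) :
    ∃ (a b : ℤ_[ℓ]) (c u : ℤ_[ℓ]ˣ),
      a ^ 2 + b ^ 3 = (c : ℤ_[ℓ]) ^ p ∧
      PadicInt.toZMod (2 * a) = PadicInt.toZMod (-B * (u : ℤ_[ℓ]) ^ 6) ∧
      PadicInt.toZMod (3 * b) = PadicInt.toZMod (A * (u : ℤ_[ℓ]) ^ 4) := by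
  -- 2 and 3 are units in ℤ_[ℓ]
  have h2 : IsUnit ((2 : ℕ) : ℤ_[ℓ]) := by
    exact_mod_cast isUnit_nat_padic ℓ 2 (fun h =>
      absurd (Nat.le_of_dvd (by norm_num) h) (by omega))
  have h3 : IsUnit ((3 : ℕ) : ℤ_[ℓ]) := by
    exact_mod_cast isUnit_nat_padic ℓ 3 (fun h =>
      absurd (Nat.le_of_dvd (by norm_num) h) (by omega))
  have h2' : IsUnit (2 : ℤ_[ℓ]) := by exact_mod_cast h2
  have h3' : IsUnit (3 : ℤ_[ℓ]) := by exact_mod_cast h3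
  obtain ⟨i2, hi2⟩ : ∃ i2 : ℤ_[ℓ], 2 * i2 = 1 := by
    obtain ⟨w, hw⟩ := h2'
    exact ⟨(w⁻¹ : ℤ_[ℓ]ˣ), by rw [← hw]; exact w.mul_inv⟩
  obtain ⟨i3, hi3⟩ : ∃ i3 : ℤ_[ℓ], 3 * i3 = 1 := by
    obtain ⟨w, hw⟩ := h3'
    exact ⟨(w⁻¹ : ℤ_[ℓ]ˣ), by rw [← hw]; exact w.mul_inv⟩
  -- Bezout for 12 and p
  have hpnd : ¬ (p ∣ 12) := by
    intro h
    have := Nat.le_of_dvd (by norm_num) h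
    interval_cases p <;> revert hp h <;> decide
  have hcop : Nat.gcd 12 p = 1 := Nat.Coprime.gcd_eq_one ((hp.coprime_iff_not_dvd.mpr hpnd).symm)
  set m : ℤ := Int.gcdA 12 p with hm
  set n : ℤ := Int.gcdB 12 p with hn
  have hbez : 12 * m + (p : ℤ) * n = 1 := by
    have := Int.gcd_eq_gcd_ab 12 (p : ℤ)
    rw [show Int.gcd 12 (p : ℤ) = Nat.gcd 12 p by simp [Int.gcd], hcop] at this
    push_cast at this
    linarith [this]
  -- the unit V = (4A³+27B²)/108
  have h108 : (4 * A ^ 3 + 27 * B ^ 2) * (i2 ^ 2 * i3 ^ 3) * 108 = 4 * A ^ 3 + 27 * B ^ 2 := by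
    linear_combination (4 * A ^ 3 + 27 * B ^ 2) *
      ((54 * i2 * i3 ^ 3 + 27 * i3 ^ 3) * hi2 + (9 * i3 ^ 2 + 3 * i3 + 1) * hi3)
  have hVu : IsUnit ((4 * A ^ 3 + 27 * B ^ 2) * (i2 ^ 2 * i3 ^ 3)) := by
    refine isUnit_of_mul_isUnit_left (y := 108) ?_
    rwa [h108]
  set V : ℤ_[ℓ]ˣ := hVu.unit with hV
  have hVcoe : (V : ℤ_[ℓ]) = (4 * A ^ 3 + 27 * B ^ 2) * (i2 ^ 2 * i3 ^ 3) := hVu.unit_spec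
  -- the units u and c
  refine ⟨-B * (V ^ (-m) : ℤ_[ℓ]ˣ) ^ 6 * i2, A * (V ^ (-m) : ℤ_[ℓ]ˣ) ^ 4 * i3,
    V ^ n, V ^ (-m), ?_, ?_, ?_⟩
  · -- the main equation
    have hu12 : (V ^ n : ℤ_[ℓ]ˣ) ^ p = (V ^ (-m) : ℤ_[ℓ]ˣ) ^ 12 * V := by
      rw [← zpow_natCast (V ^ n) p, ← zpow_mul, ← zpow_natCast (V ^ (-m)) 12, ← zpow_mul]
      rw [show ((-m) * (12 : ℕ) : ℤ) = -(12 * m) by push_cast; ring]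
      rw [show (n * (p : ℕ) : ℤ) = (p : ℤ) * n by ring]
      rw [show ((p : ℤ) * n) = -(12 * m) + 1 by linarith [hbez]]
      rw [zpow_add, zpow_one]
    have key : ((V ^ n : ℤ_[ℓ]ˣ) : ℤ_[ℓ]) ^ p
        = ((V ^ (-m) : ℤ_[ℓ]ˣ) : ℤ_[ℓ]) ^ 12 * (V : ℤ_[ℓ]) := by
      have := congrArg (Units.coeHom ℤ_[ℓ]) hu12
      simpa using this
    rw [key, hVcoe]
    -- now a pure ring identity using hi2, hi3
    set w : ℤ_[ℓ] := ((V ^ (-m) : ℤ_[ℓ]ˣ) : ℤ_[ℓ]) with hw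
    have h4 : 4 * i2 ^ 2 = 1 := by linear_combination (2 * i2 + 1) * hi2
    have h27 : 27 * i3 ^ 3 = 1 := by linear_combination (9 * i3 ^ 2 + 3 * i3 + 1) * hi3
    linear_combination (-(A ^ 3 * w ^ 12 * i3 ^ 3)) * h4 + (-(B ^ 2 * w ^ 12 * i2 ^ 2)) * h27
  · congr 1
    linear_combination (-B * ((V ^ (-m) : ℤ_[ℓ]ˣ) : ℤ_[ℓ]) ^ 6) * hi2
  · congr 1
    linear_combination (A * ((V ^ (-m) : ℤ_[ℓ]ˣ) : ℤ_[ℓ]) ^ 4) * hi3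
end

section
/- Let ℓ > 3 and p > 3 be distinct primes, let k be a positive integer, and let j₀ ∈ ℚ_ℓ be an element whose ℓ-adic valuation equals −k·p. Then there exist units a, b of ℤ_ℓ and an element c ∈ ℤ_ℓ of ℓ-adic valuation k such that a^2 + b^3 = c^p and 12^3·b^3 = j₀·c^p (the latter an equality in ℚ_ℓ). -/
private lemma aux_a {R : Type*} [CommRing R] (α β : R) (p m : ℕ) (hm : 2 * m = 3 * p + 1) :
    (α ^ m * β ^ p ^ 2) ^ 2 = (α ^ 3 * β ^ (2 * p)) ^ p * α := by
  rw [mul_pow, mul_pow, ← pow_mul, ← pow_mul, ← pow_mul, ← pow_mul,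
    show m * 2 = 3 * p + 1 from by omega, show p ^ 2 * 2 = 2 * p * p from by ring, pow_succ]
  ring

private lemma aux_b {R : Type*} [CommRing R] (α β : R) (p n : ℕ) (hn : 3 * n = 2 * p ^ 2 + 1) :
    (α ^ p * β ^ n) ^ 3 = (α ^ 3 * β ^ (2 * p)) ^ p * β := by
  rw [mul_pow, mul_pow, ← pow_mul, ← pow_mul, ← pow_mul, ← pow_mul,
    show n * 3 = 2 * p * p + 1 from by rw [mul_comm n 3, hn]; ring,
    show p * 3 = 3 * p from by ring, pow_succ]
  ring

private lemma padic_val_nat_pow (ℓ : ℕ) [Fact ℓ.Prime] (n : ℕ) :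
    (((ℓ : ℚ_[ℓ]) ^ n).valuation) = n := by
  have hl0 : (ℓ : ℚ_[ℓ]) ≠ 0 := by
    exact_mod_cast Nat.cast_ne_zero.mpr (Fact.out : ℓ.Prime).pos.ne'
  induction n with
  | zero => simp
  | succ n ih =>
    rw [pow_succ, Padic.valuation_mul (pow_ne_zero _ hl0) hl0, ih, Padic.valuation_p]
    push_cast; ring

/-- Let `ℓ > 3` and `p > 3` be distinct primes, `k` a positive integer, and `j₀ ∈ ℚ_ℓ` with
`v_ℓ(j₀) = -k p`. Then there exist units `a, b` of `ℤ_ℓ` and `c ∈ ℤ_ℓ` with `v_ℓ(c) = k`,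
`a² + b³ = cᵖ` and `12³ b³ = j₀ cᵖ` in `ℚ_ℓ`. -/
theorem exists_ell_primitive_solution_mult_reduction (ℓ p : ℕ) [Fact ℓ.Prime] (hp : p.Prime)
    (hℓ3 : ℓ > 3) (hp3 : p > 3) (hℓp : ℓ ≠ p) (k : ℕ) (hk : 0 < k) (j₀ : ℚ_[ℓ])
    (hj : j₀.valuation = -(k * p : ℤ)) :
    ∃ (a b : ℤ_[ℓ]ˣ) (c : ℤ_[ℓ]),
      c.valuation = (k : ℤ) ∧
      (a : ℤ_[ℓ]) ^ 2 + (b : ℤ_[ℓ]) ^ 3 = c ^ p ∧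
      (12 ^ 3 * ((b : ℤ_[ℓ]) : ℚ_[ℓ]) ^ 3 : ℚ_[ℓ]) = j₀ * ((c : ℚ_[ℓ])) ^ p := by
  have hℓprime : ℓ.Prime := Fact.out
  have h1p : (1 : ℝ) < ℓ := by exact_mod_cast hℓprime.one_lt
  -- exponents m, n
  have hp2 : p % 2 = 1 := by
    have : ¬ (2 ∣ p) := by
      intro h2
      rcases (Nat.prime_dvd_prime_iff_eq Nat.prime_two hp).mp h2 with rfl
      omega
    omega
  have hp3' : p % 3 = 1 ∨ p % 3 = 2 := by
    have : ¬ (3 ∣ p) := by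
      intro h3
      rcases (Nat.prime_dvd_prime_iff_eq Nat.prime_three hp).mp h3 with rfl
      omega
    omega
  obtain ⟨m, hm⟩ : ∃ m, 2 * m = 3 * p + 1 := ⟨(3 * p + 1) / 2, by omega⟩
  have hq : p ^ 2 % 3 = 1 := by
    rw [pow_two, Nat.mul_mod]
    rcases hp3' with h | h <;> rw [h]
  obtain ⟨n, hn⟩ : ∃ n, 3 * n = 2 * p ^ 2 + 1 := ⟨(2 * p ^ 2 + 1) / 3, by omega⟩
  -- j₀ ≠ 0 and the unit u = j₀ ℓ^{kp}
  have hkp : 0 < k * p := Nat.mul_pos hk hp.pos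
  have hj0 : j₀ ≠ 0 := by
    intro h
    rw [h, Padic.valuation_zero] at hj
    omega
  have hl0 : (ℓ : ℚ_[ℓ]) ≠ 0 := Nat.cast_ne_zero.mpr hℓprime.pos.ne'
  set u : ℚ_[ℓ] := j₀ * (ℓ : ℚ_[ℓ]) ^ (k * p) with hu_def
  have hu0 : u ≠ 0 := mul_ne_zero hj0 (pow_ne_zero _ hl0)
  have hvu : u.valuation = 0 := by
    rw [hu_def, Padic.valuation_mul hj0 (pow_ne_zero _ hl0), hj, padic_val_nat_pow]
    push_cast; ring
  have hnu : ‖u‖ = 1 := by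
    rw [Padic.norm_eq_zpow_neg_valuation hu0, hvu]; norm_num
  set U : ℤ_[ℓ] := ⟨u, le_of_eq hnu⟩ with hU_def
  have hUnorm : ‖U‖ = 1 := hnu
  have hUunit : IsUnit U := PadicInt.isUnit_iff.mpr hUnorm
  have hUcoe : (U : ℚ_[ℓ]) = u := rfl
  -- 1728 is a unit of ℤ_ℓ
  have hTunit : IsUnit (1728 : ℤ_[ℓ]) := by
    by_contra h
    rw [PadicInt.not_isUnit_iff] at h
    have h1 : ((1728 : ℤ) : ℤ_[ℓ]) = (1728 : ℤ_[ℓ]) := by norm_cast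
    rw [← h1, PadicInt.norm_int_lt_one_iff_dvd] at h
    have hdvd : ℓ ∣ 1728 := by exact_mod_cast h
    have h2 : ℓ ∣ 2 ^ 6 * 3 ^ 3 := by norm_num at hdvd ⊢; exact_mod_cast hdvd
    rcases (Nat.Prime.dvd_mul hℓprime).mp h2 with h' | h' <;>
      [have h3 := Nat.le_of_dvd (by norm_num) (hℓprime.dvd_of_dvd_pow h');
       have h3 := Nat.le_of_dvd (by norm_num) (hℓprime.dvd_of_dvd_pow h')] <;> omega
  -- A' = 1728 ℓ^{kp} - U is a unit
  set A' : ℤ_[ℓ] := 1728 * (ℓ : ℤ_[ℓ]) ^ (k * p) - U with hA'_def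
  have hlt : ‖(1728 : ℤ_[ℓ]) * (ℓ : ℤ_[ℓ]) ^ (k * p)‖ < 1 := by
    calc ‖(1728 : ℤ_[ℓ]) * (ℓ : ℤ_[ℓ]) ^ (k * p)‖
        ≤ 1 * ‖(ℓ : ℤ_[ℓ]) ^ (k * p)‖ := by
          rw [norm_mul]
          exact mul_le_mul_of_nonneg_right (PadicInt.norm_le_one _) (norm_nonneg _)
      _ = (ℓ : ℝ) ^ (-(k * p : ℕ) : ℤ) := by rw [one_mul, PadicInt.norm_p_pow]
      _ < 1 := by
          apply zpow_lt_one_of_neg₀ h1p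
          omega
  have hAunit : IsUnit A' := by
    rw [PadicInt.isUnit_iff]
    refine le_antisymm (PadicInt.norm_le_one _) (not_lt.mp fun h => ?_)
    have hU1 : ‖U‖ < 1 := by
      have hrw : U = 1728 * (ℓ : ℤ_[ℓ]) ^ (k * p) + -A' := by rw [hA'_def]; ring
      rw [hrw]
      exact lt_of_le_of_lt (PadicInt.nonarchimedean _ _)
        (max_lt hlt (by rwa [norm_neg]))
    rw [hUnorm] at hU1; norm_num at hU1
  -- the units A, B, λ
  set uT : ℤ_[ℓ]ˣ := hTunit.unit with huT
  set uU : ℤ_[ℓ]ˣ := hUunit.unit with huU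
  set uA : ℤ_[ℓ]ˣ := hAunit.unit with huA
  have hT : (uT : ℤ_[ℓ]) = 1728 := hTunit.unit_spec
  have hAspec : (uA : ℤ_[ℓ]) = A' := hAunit.unit_spec
  have hUspec : (uU : ℤ_[ℓ]) = U := hUunit.unit_spec
  set A : ℤ_[ℓ]ˣ := uA * uT⁻¹ with hA_def
  set B : ℤ_[ℓ]ˣ := uU * uT⁻¹ with hB_def
  have hTinv : (uT : ℤ_[ℓ]) * ((uT⁻¹ : ℤ_[ℓ]ˣ) : ℤ_[ℓ]) = 1 := by
    rw [← Units.val_mul, mul_inv_cancel, Units.val_one]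
  have hsum : (A : ℤ_[ℓ]) + (B : ℤ_[ℓ]) = (ℓ : ℤ_[ℓ]) ^ (k * p) := by
    rw [hA_def, hB_def, Units.val_mul, Units.val_mul, hAspec, hUspec, ← add_mul, hA'_def,
      sub_add_cancel, ← hT, mul_right_comm, hTinv, one_mul]
  have h1728B : (1728 : ℤ_[ℓ]) * (B : ℤ_[ℓ]) = U := by
    rw [hB_def, Units.val_mul, hUspec, ← hT, mul_comm ((uT : ℤ_[ℓ])), mul_assoc,
      ← Units.val_mul, inv_mul_cancel, Units.val_one, mul_one]
  refine ⟨A ^ m * B ^ (p ^ 2), A ^ p * B ^ n, (ℓ : ℤ_[ℓ]) ^ k * ((A ^ 3 * B ^ (2 * p) : ℤ_[ℓ]ˣ) : ℤ_[ℓ]), ?_, ?_, ?_⟩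
  · -- valuation
    have hlam0 : ((A ^ 3 * B ^ (2 * p) : ℤ_[ℓ]ˣ) : ℤ_[ℓ]) ≠ 0 := Units.ne_zero _
    rw [PadicInt.valuation_p_pow_mul k _ hlam0]
    have hln : ‖((A ^ 3 * B ^ (2 * p) : ℤ_[ℓ]ˣ) : ℤ_[ℓ])‖ = 1 := PadicInt.norm_units _
    rw [PadicInt.norm_eq_zpow_neg_valuation hlam0, ← zpow_zero ((ℓ : ℝ))] at hln
    have := (zpow_right_strictMono₀ h1p).injective hln
    omega
  · -- a² + b³ = cᵖ
    simp only [Units.val_mul, Units.val_pow_eq_pow_val]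
    rw [aux_a _ _ p m hm, aux_b _ _ p n hn, ← mul_add, hsum]
    ring
  · -- 12³ b³ = j₀ cᵖ
    have h3 : (1728 : ℤ_[ℓ]) * ((A ^ p * B ^ n : ℤ_[ℓ]ˣ) : ℤ_[ℓ]) ^ 3
        = (((A ^ 3 * B ^ (2 * p) : ℤ_[ℓ]ˣ) : ℤ_[ℓ])) ^ p * U := by
      simp only [Units.val_mul, Units.val_pow_eq_pow_val]
      rw [aux_b _ _ p n hn, mul_left_comm, h1728B]
    have h3' := congrArg (fun z : ℤ_[ℓ] => (z : ℚ_[ℓ])) h3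
    simp only [PadicInt.coe_mul, PadicInt.coe_pow, hUcoe] at h3'
    have h1728 : ((1728 : ℤ_[ℓ]) : ℚ_[ℓ]) = 1728 := by norm_cast
    rw [h1728] at h3'
    rw [show (12 : ℚ_[ℓ]) ^ 3 = 1728 by norm_num, h3', hu_def]
    push_cast
    ring
end
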